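/- For each n ∈ ℕ let 𝒳_n be a Polish space, let A_n be a set of Borel probability measures on 𝒳_n, and let r_n > 0 with r_n → ∞. Suppose that for each a > 0 there exist compact sets K_n^a ⊆ 𝒳_n (one for each n) such that limsup_n (1/r_n) log sup_{μ ∈ A_n} μ((K_n^a)^c) ≤ −a. Let B_n be sets of Borel probability measures on 𝒳_n such that there is a constant M ≥ 0 with sup_n sup_{ν ∈ B_n} inf_{μ ∈ A_n} (1/r_n) S(ν | μ) ≤ M. Then for every ε > 0 there is a constant a = a(ε) > 0 such that limsup_n sup_{ν ∈ B_n} ν((K_n^a)^c) ≤ 2ε. -/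

import Mathlib

open MeasureTheory Filter Topology
open scoped ENNReal NNReal

-- Relative entropy (Kullback–Leibler divergence) `S(ν | μ)`, valued in `[0, ∞]`:
-- `S(ν | μ) = ∫ log (dν/dμ) dν` if `ν ≪ μ` (and the integral exists), and `∞` otherwise.
open scoped Classical in
noncomputable def relEnt {𝒳 : Type*} [MeasurableSpace 𝒳] (ν μ : Measure 𝒳) : ℝ≥0∞ :=
  if ν ≪ μ ∧ Integrable (llr ν μ) ν then ENNReal.ofReal (∫ x, llr ν μ x ∂ν) else ⊤


lemma mul_le_mul_log_add_exp (x y : ℝ) (hx : 0 ≤ x) :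
    x * y ≤ x * Real.log x + Real.exp (y - 1) := by
  rcases hx.eq_or_lt with h | h
  · rw [← h]; simp; positivity
  · have h1 : y - Real.log x ≤ Real.exp (y - Real.log x - 1) := by
      linarith [Real.add_one_le_exp (y - Real.log x - 1)]
    have h2 : Real.exp (y - Real.log x - 1) = Real.exp (y - 1) / x := by
      rw [show y - Real.log x - 1 = (y - 1) - Real.log x by ring, Real.exp_sub, Real.exp_log h]
    rw [h2] at h1
    have h3 := mul_le_mul_of_nonneg_left h1 h.le
    rw [mul_div_cancel₀ _ h.ne'] at h3
    nlinarith

lemma entropy_ineq {𝒳 : Type*} [MeasurableSpace 𝒳] (ν μ : Measure 𝒳)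
    [IsProbabilityMeasure ν] [IsProbabilityMeasure μ]
    (hac : ν ≪ μ) (hint : Integrable (llr ν μ) ν)
    {C : Set 𝒳} (hC : MeasurableSet C) (t : ℝ) :
    t * (ν C).toReal ≤ ∫ x, llr ν μ x ∂ν + Real.exp (t - 1) * (μ C).toReal + 1 := by
  set g : 𝒳 → ℝ := fun x => (ν.rnDeriv μ x).toReal with hg
  set f : 𝒳 → ℝ := C.indicator (fun _ => t) with hf
  have hintf : Integrable f ν := (integrable_const t).indicator hC
  have h1 : ∫ x, f x ∂ν = t * (ν C).toReal := by
    rw [hf, integral_indicator_const t hC]; simp [mul_comm, measureReal_def]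
  have h2 : ∫ x, g x • f x ∂μ = ∫ x, f x ∂ν := integral_rnDeriv_smul hac
  have h3 : ∫ x, g x • llr ν μ x ∂μ = ∫ x, llr ν μ x ∂ν := integral_rnDeriv_smul hac
  have hint2 : Integrable (fun x => g x • llr ν μ x) μ :=
    (integrable_rnDeriv_smul_iff hac).mpr hint
  have hintgf : Integrable (fun x => g x • f x) μ :=
    (integrable_rnDeriv_smul_iff hac).mpr hintf
  have hexp_eq : (fun x => Real.exp (f x - 1)) =
      fun x => C.indicator (fun _ => Real.exp (t - 1) - Real.exp (-1)) x + Real.exp (-1) := by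
    funext x
    by_cases hx : x ∈ C <;> simp [hf, hx, Set.indicator_of_mem, Set.indicator_of_notMem]
  have hintexp : Integrable (fun x => Real.exp (f x - 1)) μ := by
    rw [hexp_eq]
    exact (((integrable_const _).indicator hC).add (integrable_const _))
  have hintegral_exp : ∫ x, Real.exp (f x - 1) ∂μ
      = (Real.exp (t - 1) - Real.exp (-1)) * (μ C).toReal + Real.exp (-1) := by
    rw [hexp_eq, integral_add ((integrable_const _).indicator hC) (integrable_const _),
      integral_indicator_const _ hC, integral_const]
    simp [mul_comm, measureReal_def]
  have hpt : ∀ x, g x • f x ≤ g x • llr ν μ x + Real.exp (f x - 1) := by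
    intro x
    have : llr ν μ x = Real.log (g x) := rfl
    rw [smul_eq_mul, smul_eq_mul, this]
    exact mul_le_mul_log_add_exp (g x) (f x) ENNReal.toReal_nonneg
  have hmono : ∫ x, g x • f x ∂μ ≤ ∫ x, (g x • llr ν μ x + Real.exp (f x - 1)) ∂μ :=
    integral_mono hintgf (hint2.add hintexp) hpt
  rw [integral_add hint2 hintexp, h2, h1, h3, hintegral_exp] at hmono
  have hμC : 0 ≤ (μ C).toReal := ENNReal.toReal_nonneg
  have he1 : Real.exp (-1) ≤ 1 := by
    rw [show (1:ℝ) = Real.exp 0 by simp]; exact Real.exp_le_exp.mpr (by norm_num)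
  nlinarith [Real.exp_pos (-1 : ℝ)]

lemma le_biSup_apply {𝒳 : Type*} [MeasurableSpace 𝒳] (s : Set (ProbabilityMeasure 𝒳))
    {μ : ProbabilityMeasure 𝒳} (hμ : μ ∈ s) (C : Set 𝒳) :
    μ C ≤ ⨆ ν ∈ s, ν C := by
  have hbdd : BddAbove (Set.range fun ν : ProbabilityMeasure 𝒳 => ⨆ _ : ν ∈ s, ν C) := by
    refine ⟨1, ?_⟩
    rintro x ⟨ν, rfl⟩
    exact ciSup_le' fun _ => ν.apply_le_one C
  refine le_trans ?_ (le_ciSup hbdd μ)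
  have hbdd2 : BddAbove (Set.range fun _ : μ ∈ s => μ C) := by
    refine ⟨μ C, ?_⟩
    rintro x ⟨h, rfl⟩
    exact le_rfl
  exact le_ciSup hbdd2 hμ

/-- Tightness for exponentially tilted measures: if the families `A_n` are exponentially tight
at speed `r_n` (witnessed by compact sets `K a n` for each `a > 0`) and the families `B_n` have
uniformly bounded rescaled relative entropy with respect to `A_n`, then for every `ε > 0` there
is `a > 0` with `limsup_n sup_{ν ∈ B_n} ν((K a n)ᶜ) ≤ 2ε`. -/
theorem tightness_of_exponential_tightness_and_entropy_bound
    (𝒳 : ℕ → Type*) [∀ n, TopologicalSpace (𝒳 n)] [∀ n, PolishSpace (𝒳 n)]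
    [∀ n, MeasurableSpace (𝒳 n)] [∀ n, BorelSpace (𝒳 n)]
    (A B : ∀ n, Set (ProbabilityMeasure (𝒳 n)))
    (r : ℕ → ℝ) (hr : ∀ n, 0 < r n) (hrtop : Tendsto r atTop atTop)
    (K : ℝ → ∀ n, Set (𝒳 n))
    (hKcompact : ∀ a > (0 : ℝ), ∀ n, IsCompact (K a n))
    (hKexp : ∀ a > (0 : ℝ),
      Filter.limsup (fun n =>
          (1 / r n) * Real.log ((⨆ μ ∈ A n, μ ((K a n)ᶜ) : ℝ≥0) : ℝ)) atTop ≤ -a)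
    (M : ℝ) (hM : 0 ≤ M)
    (hB : ∀ n, ∀ ν ∈ B n,
      ⨅ μ ∈ A n, ENNReal.ofReal (1 / r n) * relEnt (ν : Measure (𝒳 n)) (μ : Measure (𝒳 n))
        ≤ ENNReal.ofReal M) :
    ∀ ε > (0 : ℝ), ∃ a > (0 : ℝ),
      Filter.limsup (fun n => ((⨆ ν ∈ B n, ν ((K a n)ᶜ) : ℝ≥0) : ℝ)) atTop ≤ 2 * ε := by
  intro ε hε
  set a : ℝ := 2 * (M + 1) / ε with ha_def
  have haε : a * ε = 2 * (M + 1) := div_mul_cancel₀ _ hε.ne'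
  have ha : 0 < a := by positivity
  refine ⟨a, ha, ?_⟩
  set s : ℕ → ℝ := fun n => ((⨆ μ ∈ A n, μ ((K a n)ᶜ) : ℝ≥0) : ℝ) with hs_def
  have hs0 : ∀ n, 0 ≤ s n := fun n => NNReal.coe_nonneg _
  have hs1 : ∀ n, s n ≤ 1 := by
    intro n
    have : (⨆ μ ∈ A n, μ ((K a n)ᶜ) : ℝ≥0) ≤ 1 :=
      ciSup_le' fun μ => ciSup_le' fun _ => μ.apply_le_one _
    exact_mod_cast this
  have hbound : IsBoundedUnder (· ≤ ·) atTop (fun n => (1 / r n) * Real.log (s n)) :=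
    isBoundedUnder_of ⟨0, fun n => mul_nonpos_of_nonneg_of_nonpos
      (by have := hr n; positivity) (Real.log_nonpos (hs0 n) (hs1 n))⟩
  have hev1 : ∀ᶠ n in atTop, (1 / r n) * Real.log (s n) < -(a/2) :=
    eventually_lt_of_limsup_lt (lt_of_le_of_lt (hKexp a ha) (by linarith)) hbound
  have hev2 : ∀ᶠ n in atTop, (2:ℝ) ≤ r n := hrtop.eventually_ge_atTop 2
  have hev : ∀ᶠ n in atTop, ((⨆ ν ∈ B n, ν ((K a n)ᶜ) : ℝ≥0) : ℝ) ≤ 2 * ε := by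
    filter_upwards [hev1, hev2] with n h1 h2
    have hlog : Real.log (s n) < -(a/2) * r n := by
      rw [one_div_mul_eq_div] at h1
      exact (div_lt_iff₀ (hr n)).mp h1
    have hsle : s n ≤ Real.exp (-(a/2) * r n) := by
      rcases (hs0 n).eq_or_lt with h | h
      · rw [← h]; positivity
      · calc s n = Real.exp (Real.log (s n)) := (Real.exp_log h).symm
          _ ≤ _ := Real.exp_le_exp.mpr hlog.le
    have hkey : ∀ ν ∈ B n, ((ν ((K a n)ᶜ) : ℝ≥0) : ℝ) ≤ 2 * ε := by
      intro ν hν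
      have hC : MeasurableSet ((K a n)ᶜ) := ((hKcompact a ha n).isClosed.measurableSet).compl
      have hlt : (⨅ μ ∈ A n, ENNReal.ofReal (1 / r n) *
          relEnt (ν : Measure (𝒳 n)) (μ : Measure (𝒳 n))) < ENNReal.ofReal (M + 1) :=
        (hB n ν hν).trans_lt ((ENNReal.ofReal_lt_ofReal_iff_of_nonneg hM).mpr (lt_add_one M))
      simp only [iInf_lt_iff] at hlt
      obtain ⟨μ, hμA, hμ⟩ := hlt
      have hr0 : (0:ℝ) < 1 / r n := by have := hr n; positivity
      have hne : ENNReal.ofReal (1 / r n) ≠ 0 := (ENNReal.ofReal_pos.mpr hr0).ne'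
      have hcond : (ν : Measure (𝒳 n)) ≪ (μ : Measure (𝒳 n)) ∧
          Integrable (llr (ν : Measure (𝒳 n)) (μ : Measure (𝒳 n))) (ν : Measure (𝒳 n)) := by
        by_contra hc
        rw [relEnt, if_neg hc, ENNReal.mul_top hne] at hμ
        exact not_top_lt hμ
      obtain ⟨hac, hint⟩ := hcond
      rw [relEnt, if_pos ⟨hac, hint⟩] at hμ
      set S := ∫ x, llr (ν : Measure (𝒳 n)) (μ : Measure (𝒳 n)) x ∂(ν : Measure (𝒳 n)) with hS_def
      have hSle : S ≤ r n * (M + 1) := by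
        by_cases hS0 : 0 ≤ S
        · rw [← ENNReal.ofReal_mul hr0.le] at hμ
          have h' := (ENNReal.ofReal_lt_ofReal_iff_of_nonneg (by positivity)).mp hμ
          rw [one_div_mul_eq_div, div_lt_iff₀ (hr n)] at h'
          nlinarith
        · nlinarith [hr n]
      set t : ℝ := a / 2 * r n with ht_def
      have ht : 0 < t := by have := hr n; positivity
      have hkey' := entropy_ineq (ν : Measure (𝒳 n)) (μ : Measure (𝒳 n)) hac hint hC t
      have hcoe : ∀ (ρ : ProbabilityMeasure (𝒳 n)) (E : Set (𝒳 n)),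
          ((ρ : Measure (𝒳 n)) E).toReal = ((ρ E : ℝ≥0) : ℝ) := by
        intro ρ E
        rfl
      rw [hcoe ν, hcoe μ] at hkey'
      have hμC : ((μ ((K a n)ᶜ) : ℝ≥0) : ℝ) ≤ Real.exp (-t) := by
      -- μC ≤ s n ≤ exp(-(a/2) rₙ) = exp(-t)
        refine le_trans ?_ (le_trans hsle (le_of_eq (by rw [ht_def]; ring_nf)))
        exact_mod_cast le_biSup_apply (A n) hμA ((K a n)ᶜ)
      have hexp : Real.exp (t - 1) * ((μ ((K a n)ᶜ) : ℝ≥0) : ℝ) ≤ 1 := by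
        calc Real.exp (t - 1) * ((μ ((K a n)ᶜ) : ℝ≥0) : ℝ)
            ≤ Real.exp (t - 1) * Real.exp (-t) :=
              mul_le_mul_of_nonneg_left hμC (Real.exp_pos _).le
          _ = Real.exp (-1) := by rw [← Real.exp_add]; ring_nf
          _ ≤ 1 := by
              rw [show (1:ℝ) = Real.exp 0 by simp]; exact Real.exp_le_exp.mpr (by norm_num)
      have h2ε : t * (2 * ε) = 2 * (M + 1) * r n := by
        rw [ht_def]
        calc a / 2 * r n * (2 * ε) = a * ε * r n := by ring
          _ = 2 * (M + 1) * r n := by rw [haε]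
      have hfinal : t * ((ν ((K a n)ᶜ) : ℝ≥0) : ℝ) ≤ t * (2 * ε) := by
        rw [h2ε]
        nlinarith [hkey', hexp, hSle, hM, h2, hr n]
      exact le_of_mul_le_mul_left hfinal ht
    have hsup : (⨆ ν ∈ B n, ν ((K a n)ᶜ) : ℝ≥0) ≤ (2 * ε).toNNReal :=
      ciSup_le' fun ν => ciSup_le' fun hν =>
        (Real.le_toNNReal_iff_coe_le (by positivity)).mpr (hkey ν hν)
    calc ((⨆ ν ∈ B n, ν ((K a n)ᶜ) : ℝ≥0) : ℝ) ≤ ((2 * ε).toNNReal : ℝ) := by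
          exact_mod_cast hsup
      _ = 2 * ε := Real.coe_toNNReal _ (by positivity)
  have hcob : IsCoboundedUnder (· ≤ ·) atTop
      (fun n => ((⨆ ν ∈ B n, ν ((K a n)ᶜ) : ℝ≥0) : ℝ)) :=
    isCoboundedUnder_le_of_le atTop (x := 0) fun n => NNReal.coe_nonneg _
  exact limsup_le_of_le hcob hev
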